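/- arXiv:1910.06533 — 3 statements merged into one kernel-verified Lean document; each statement's English description precedes it below -/
import Mathlib

section
/- The ruled strip f(t,v) = c(t) + v ξ(t) is developable (i.e. det(c'(t), ξ(t), ξ'(t)) = 0 for all t ∈ I) if and only if the angular functions satisfy κ(t) sin α(t) cos β(t) = (α'(t) + τ(t)) sin β(t) for all t ∈ I (equivalently, cot β(t) = (α'(t) + τ(t)) / (κ(t) sin α(t)), since sin β(t) > 0). -/
noncomputable section
open Real Set
open scoped ContDiff

local notation "⟪" x ", " y "⟫" => @inner ℝ _ _ x y

/-- Euclidean 3-space. -/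
abbrev E3 := EuclideanSpace ℝ (Fin 3)

/-- The vector (cross) product of `ℝ³`. -/
def cross3 (u v : E3) : E3 :=
  (WithLp.equiv 2 (Fin 3 → ℝ)).symm
    ![u 1 * v 2 - u 2 * v 1, u 2 * v 0 - u 0 * v 2, u 0 * v 1 - u 1 * v 0]

lemma c_self (u : E3) : cross3 u u = 0 := by
  ext i; fin_cases i <;> simp [cross3] <;> ring

lemma c_smul_left (a : ℝ) (u v : E3) : cross3 (a • u) v = a • cross3 u v := by
  ext i; fin_cases i <;> simp [cross3] <;> ring

lemma c_smul_right (a : ℝ) (u v : E3) : cross3 u (a • v) = a • cross3 u v := by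
  ext i; fin_cases i <;> simp [cross3] <;> ring

lemma c_add_right (u v w : E3) : cross3 u (v + w) = cross3 u v + cross3 u w := by
  ext i; fin_cases i <;> simp [cross3] <;> ring

lemma c_triple (u v : E3) : cross3 u (cross3 u v) = ⟪u, v⟫ • u - ⟪u, u⟫ • v := by
  ext i; fin_cases i <;> simp [cross3, PiLp.inner_apply, Fin.sum_univ_three, EuclideanSpace.norm_sq_eq] <;> ring

lemma i_cu (u v : E3) : ⟪cross3 u v, u⟫ = 0 := by
  simp [cross3, PiLp.inner_apply, Fin.sum_univ_three]; ring

lemma i_cv (u v : E3) : ⟪cross3 u v, v⟫ = 0 := by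
  simp [cross3, PiLp.inner_apply, Fin.sum_univ_three]; ring

lemma i_cc (u v w : E3) : ⟪cross3 u v, cross3 u w⟫ = ⟪u,u⟫*⟪v,w⟫ - ⟪u,w⟫*⟪v,u⟫ := by
  simp [cross3, PiLp.inner_apply, Fin.sum_univ_three, EuclideanSpace.norm_sq_eq]; ring

lemma i_vc (u v w : E3) : ⟪v, cross3 u w⟫ = -⟪cross3 u v, w⟫ := by
  simp [cross3, PiLp.inner_apply, Fin.sum_univ_three]; ring

lemma key (E N P : E3) (k tv a' b' sa ca sb cb : ℝ)
    (hEE : ⟪E,E⟫ = 1) (hEN : ⟪E,N⟫ = 0) (hNN : ⟪N,N⟫ = 1) (hPN : ⟪P,N⟫ = 0)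
    (htv : tv = ⟪P, cross3 E N⟫) (hta : sa^2+ca^2 = 1) :
    ⟪cross3 E (cb • E + sb • (ca • N + sa • cross3 E N)),
      (cb • (k • N) + (-sb * b') • E) +
      (sb • ((ca • P + (-sa * a') • N) +
        (sa • (cross3 (k • N) N + cross3 E P) + (ca * a') • cross3 E N)) +
       (cb * b') • (ca • N + sa • cross3 E N))⟫
    = sb * ((a' + tv) * sb - k * sa * cb) := by
  simp only [c_add_right, c_smul_right, c_smul_left, c_self, c_triple, hEE, hEN,
    smul_zero, zero_smul, add_zero, zero_add, one_smul, zero_sub]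
  simp only [smul_zero, zero_smul, zero_sub, one_smul, zero_add, smul_neg, smul_smul,
    inner_add_left, inner_add_right, real_inner_smul_left, real_inner_smul_right,
    inner_neg_left, inner_neg_right, inner_zero_left, inner_zero_right,
    i_cu, i_cv, i_cc, hEE, hEN, hNN]
  have h1 : ⟪N, E⟫ = 0 := by rw [real_inner_comm]; exact hEN
  have h2 : ⟪N, P⟫ = 0 := by rw [real_inner_comm]; exact hPN
  have h3 : ⟪N, cross3 E N⟫ = 0 := by rw [real_inner_comm]; exact i_cv E N
  have h4 : ⟪N, cross3 E P⟫ = -⟪cross3 E N, P⟫ := i_vc E N P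
  have h5 : ⟪cross3 E N, P⟫ = tv := by rw [htv, real_inner_comm]
  rw [h1, h2, h3, h4, h5]
  linear_combination (sb^2*(tv + a')) * hta

lemma hasDerivAt_cross3 {f g : ℝ → E3} {f' g' : E3} {t : ℝ}
    (hf : HasDerivAt f f' t) (hg : HasDerivAt g g' t) :
    HasDerivAt (fun s => cross3 (f s) (g s)) (cross3 f' (g t) + cross3 (f t) g') t := by
  have Hf : ∀ i, HasDerivAt (fun s => f s i) (f' i) t := fun i => by
    exact (EuclideanSpace.proj i).hasFDerivAt.comp_hasDerivAt t hf
  have Hg : ∀ i, HasDerivAt (fun s => g s i) (g' i) t := fun i => by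
    exact (EuclideanSpace.proj i).hasFDerivAt.comp_hasDerivAt t hg
  have H : ∀ i, HasDerivAt (fun s => cross3 (f s) (g s) i)
      ((cross3 f' (g t) + cross3 (f t) g') i) t := by
    intro i
    fin_cases i
    · have := ((Hf 1).mul (Hg 2)).sub ((Hf 2).mul (Hg 1))
      exact this.congr_deriv (by simp [cross3, PiLp.add_apply]; ring)
    · have := ((Hf 2).mul (Hg 0)).sub ((Hf 0).mul (Hg 2))
      exact this.congr_deriv (by simp [cross3, PiLp.add_apply]; ring)
    · have := ((Hf 0).mul (Hg 1)).sub ((Hf 1).mul (Hg 0))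
      exact this.congr_deriv (by simp [cross3, PiLp.add_apply]; ring)
  exact ((PiLp.continuousLinearEquiv 2 ℝ (fun _ : Fin 3 => ℝ)).symm.hasFDerivAt.comp_hasDerivAt t
    (hasDerivAt_pi.2 H))

/-- the ruled strip `f(t,v) = c(t) + v ξ(t)` is developable
(`det(c', ξ, ξ') = 0` on `I`, expressed via the triple product) iff
`κ sin α cos β = (α' + τ) sin β` on `I`. -/
theorem stmt0 (a b : ℝ) (hab : a < b)
    (c : ℝ → E3) (hc : ContDiff ℝ ∞ c) (hinj : InjOn c (Icc a b))
    (harc : ∀ t ∈ Icc a b, ‖deriv c t‖ = 1)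
    (κ : ℝ → ℝ) (hκ : ∀ t, κ t = ‖deriv (deriv c) t‖)
    (hκpos : ∀ t ∈ Icc a b, 0 < κ t)
    (e n bi : ℝ → E3) (τ : ℝ → ℝ)
    (he : ∀ t, e t = deriv c t)
    (hn : ∀ t, n t = (κ t)⁻¹ • deriv (deriv c) t)
    (hbi : ∀ t, bi t = cross3 (e t) (n t))
    (hτ : ∀ t, τ t = ⟪deriv n t, bi t⟫)
    (α β : ℝ → ℝ) (hα : ContDiff ℝ ∞ α) (hβ : ContDiff ℝ ∞ β)
    (hα1 : ∀ t ∈ Icc a b, 0 < |α t| ∧ |α t| < π / 2)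
    (hβ1 : ∀ t ∈ Icc a b, 0 < β t ∧ β t < π)
    (ξ : ℝ → E3)
    (hξ : ∀ t, ξ t = cos (β t) • e t +
      sin (β t) • (cos (α t) • n t + sin (α t) • bi t)) :
    (∀ t ∈ Icc a b, ⟪cross3 (deriv c t) (ξ t), deriv ξ t⟫ = 0) ↔
      (∀ t ∈ Icc a b,
        κ t * sin (α t) * cos (β t) = (deriv α t + τ t) * sin (β t)) := by
  have hefun : e = deriv c := funext he
  have hc' : ContDiff ℝ ∞ (deriv c) := (contDiff_infty_iff_deriv.mp hc).2
  have hc'' : ContDiff ℝ ∞ (deriv (deriv c)) := (contDiff_infty_iff_deriv.mp hc').2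
  have hκfun : κ = fun s => ‖deriv (deriv c) s‖ := funext hκ
  have hκcont : Continuous κ := by rw [hκfun]; exact hc''.continuous.norm
  -- ⟪n s, n s⟫ = 1 wherever κ s > 0
  have hnn1 : ∀ s, 0 < κ s → ⟪n s, n s⟫ = 1 := by
    intro s hs
    rw [hn s, real_inner_smul_left, real_inner_smul_right,
      real_inner_self_eq_norm_mul_norm, ← hκ s]
    field_simp
  have main : ∀ t ∈ Icc a b,
      (⟪cross3 (deriv c t) (ξ t), deriv ξ t⟫ = 0 ↔
        κ t * sin (α t) * cos (β t) = (deriv α t + τ t) * sin (β t)) := by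
    intro t ht
    have hκt : 0 < κ t := hκpos t ht
    -- differentiability of n at t
    have hκAt : ContDiffAt ℝ ∞ κ t := by
      rw [hκfun]
      exact (hc''.contDiffAt).norm ℝ (norm_pos_iff.mp (hκ t ▸ hκt))
    have hnAt : ContDiffAt ℝ ∞ n t := by
      have : ContDiffAt ℝ ∞ (fun s => (κ s)⁻¹ • deriv (deriv c) s) t :=
        (hκAt.inv hκt.ne').smul hc''.contDiffAt
      exact this.congr_of_eventuallyEq (Filter.Eventually.of_forall fun s => (hn s))
    have hnD : HasDerivAt n (deriv n t) t :=
      (hnAt.differentiableAt (by simp)).hasDerivAt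
    have heD : HasDerivAt e (κ t • n t) t := by
      have h1 : HasDerivAt (deriv c) (deriv (deriv c) t) t :=
        ((hc'.differentiable (by simp)) t).hasDerivAt
      have h2 : κ t • n t = deriv (deriv c) t := by
        rw [hn t, smul_smul, mul_inv_cancel₀ hκt.ne', one_smul]
      rw [hefun, h2]; exact h1
    have hbD : HasDerivAt bi (cross3 (κ t • n t) (n t) + cross3 (e t) (deriv n t)) t := by
      have := hasDerivAt_cross3 heD hnD
      have hbfun : bi = fun s => cross3 (e s) (n s) := funext hbi
      rw [hbfun]; exact this
    -- inner product facts
    have f1 : ⟪e t, e t⟫ = 1 := by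
      rw [he t, real_inner_self_eq_norm_mul_norm, harc t ht]; norm_num
    have f2 : ⟪e t, n t⟫ = 0 := by
      have hcd : HasDerivAt (deriv c) (deriv (deriv c) t) t :=
        ((hc'.differentiable (by simp)) t).hasDerivAt
      have hgd : HasDerivAt (fun s => ⟪deriv c s, deriv c s⟫)
          (⟪deriv c t, deriv (deriv c) t⟫ + ⟪deriv (deriv c) t, deriv c t⟫) t :=
        HasDerivAt.inner ℝ hcd hcd
      have hU : UniqueDiffWithinAt ℝ (Icc a b) t := (uniqueDiffOn_Icc hab) t ht
      have hg1 : EqOn (fun s => ⟪deriv c s, deriv c s⟫) (fun _ => (1:ℝ)) (Icc a b) := by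
        intro s hs
        simp only
        rw [real_inner_self_eq_norm_mul_norm, harc s hs]; norm_num
      have hd0 : derivWithin (fun s => ⟪deriv c s, deriv c s⟫) (Icc a b) t = 0 := by
        rw [derivWithin_congr hg1 (hg1 ht)]
        exact (hasDerivWithinAt_const t (Icc a b) (1:ℝ)).derivWithin hU
      have hdv : derivWithin (fun s => ⟪deriv c s, deriv c s⟫) (Icc a b) t =
          ⟪deriv c t, deriv (deriv c) t⟫ + ⟪deriv (deriv c) t, deriv c t⟫ :=
        hgd.hasDerivWithinAt.derivWithin hU
      have hz : ⟪deriv c t, deriv (deriv c) t⟫ = 0 := by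
        have := hd0 ▸ hdv
        rw [real_inner_comm (deriv (deriv c) t) (deriv c t)] at this
        linarith
      rw [he t, hn t, real_inner_smul_right, hz, mul_zero]
    have f3 : ⟪n t, n t⟫ = 1 := hnn1 t hκt
    have f4 : ⟪deriv n t, n t⟫ = 0 := by
      have hev : ∀ᶠ s in nhds t, ⟪n s, n s⟫ = (1:ℝ) := by
        have hop : IsOpen {s : ℝ | 0 < κ s} := isOpen_lt continuous_const hκcont
        filter_upwards [hop.mem_nhds hκt] with s hs using hnn1 s hs
      have hder : HasDerivAt (fun s => ⟪n s, n s⟫)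
          (⟪n t, deriv n t⟫ + ⟪deriv n t, n t⟫) t := HasDerivAt.inner ℝ hnD hnD
      have h0 : deriv (fun s => ⟪n s, n s⟫) t = 0 := by
        rw [Filter.EventuallyEq.deriv_eq hev, deriv_const]
      have := hder.deriv
      rw [h0] at this
      rw [real_inner_comm]
      linarith [real_inner_comm (n t) (deriv n t), this]
    have f5 : τ t = ⟪deriv n t, cross3 (e t) (n t)⟫ := by rw [hτ t, hbi t]
    -- derivatives of the angle functions
    have hαD : HasDerivAt α (deriv α t) t := ((hα.differentiable (by simp)) t).hasDerivAt
    have hβD : HasDerivAt β (deriv β t) t := ((hβ.differentiable (by simp)) t).hasDerivAt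
    have hcosβ : HasDerivAt (fun s => cos (β s)) (-sin (β t) * deriv β t) t :=
      (Real.hasDerivAt_cos (β t)).comp t hβD
    have hsinβ : HasDerivAt (fun s => sin (β s)) (cos (β t) * deriv β t) t :=
      (Real.hasDerivAt_sin (β t)).comp t hβD
    have hcosα : HasDerivAt (fun s => cos (α s)) (-sin (α t) * deriv α t) t :=
      (Real.hasDerivAt_cos (α t)).comp t hαD
    have hsinα : HasDerivAt (fun s => sin (α s)) (cos (α t) * deriv α t) t :=
      (Real.hasDerivAt_sin (α t)).comp t hαD
    have hξfun : ξ = fun s => cos (β s) • e s +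
        sin (β s) • (cos (α s) • n s + sin (α s) • bi s) := funext hξ
    have hξD : HasDerivAt ξ
        ((cos (β t) • (κ t • n t) + (-sin (β t) * deriv β t) • e t) +
          (sin (β t) • ((cos (α t) • deriv n t + (-sin (α t) * deriv α t) • n t) +
            (sin (α t) • (cross3 (κ t • n t) (n t) + cross3 (e t) (deriv n t)) +
              (cos (α t) * deriv α t) • bi t)) +
           (cos (β t) * deriv β t) • (cos (α t) • n t + sin (α t) • bi t))) t := by
      rw [hξfun]
      exact (hcosβ.smul heD).add
        (hsinβ.smul ((hcosα.smul hnD).add (hsinα.smul hbD)))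
    have hval : ⟪cross3 (deriv c t) (ξ t), deriv ξ t⟫ =
        sin (β t) * ((deriv α t + τ t) * sin (β t) - κ t * sin (α t) * cos (β t)) := by
      rw [← he t, hξ t, hξD.deriv, hbi t]
      exact key (e t) (n t) (deriv n t) (κ t) (τ t) (deriv α t) (deriv β t)
        (sin (α t)) (cos (α t)) (sin (β t)) (cos (β t))
        f1 f2 f3 f4 f5 (sin_sq_add_cos_sq (α t))
    have hsβ : 0 < sin (β t) := sin_pos_of_pos_of_lt_pi (hβ1 t ht).1 (hβ1 t ht).2
    rw [hval]
    constructor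
    · intro h
      have h2 := (mul_eq_zero.mp h).resolve_left hsβ.ne'
      linarith
    · intro h
      rw [← h]; ring
  exact ⟨fun H t ht => (main t ht).mp (H t ht), fun H t ht => (main t ht).mpr (H t ht)⟩
end
end

section
/- (Lemma 1.1) For all sufficiently small ε > 0, the set S := {(t,v) ∈ Ω_ε : there exists (t',v') ∈ Ω_ε with (t',v') ≠ (t,v) such that φ_f(t,v) = ψ_f(t',v')} has empty interior in Ω_ε := I × (−ε, ε). -/
noncomputable section
open Real Set
open scoped ContDiff

local notation "⟪" x ", " y "⟫" => @inner ℝ _ _ x y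

lemma inner_E3 (x y : E3) : ⟪x, y⟫ = x 0 * y 0 + x 1 * y 1 + x 2 * y 2 := by
  simp [PiLp.inner_apply, Fin.sum_univ_three]; ring

lemma cross3_apply (u v : E3) : cross3 u v 0 = u 1 * v 2 - u 2 * v 1 ∧
    cross3 u v 1 = u 2 * v 0 - u 0 * v 2 ∧ cross3 u v 2 = u 0 * v 1 - u 1 * v 0 := by
  simp [cross3]

lemma inner_cross_left (u v : E3) : ⟪u, cross3 u v⟫ = 0 := by
  simp [inner_E3, cross3, Fin.sum_univ_three]; ring

lemma inner_cross_right (u v : E3) : ⟪v, cross3 u v⟫ = 0 := by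
  simp [inner_E3, cross3, Fin.sum_univ_three]; ring

lemma inner_cross_self (u v : E3) :
    ⟪cross3 u v, cross3 u v⟫ = ⟪u, u⟫ * ⟪v, v⟫ - ⟪u, v⟫ ^ 2 := by
  obtain ⟨h0, h1, h2⟩ := cross3_apply u v
  rw [inner_E3, inner_E3, inner_E3, inner_E3, h0, h1, h2]; ring

lemma contDiffOn_proj (i : Fin 3) {g : ℝ → E3} {s : Set ℝ} (hg : ContDiffOn ℝ ∞ g s) :
    ContDiffOn ℝ ∞ (fun t => g t i) s :=
  (EuclideanSpace.proj i : E3 →L[ℝ] ℝ).contDiff.comp_contDiffOn hg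

lemma contDiffOn_cross3 {g h : ℝ → E3} {s : Set ℝ} (hg : ContDiffOn ℝ ∞ g s)
    (hh : ContDiffOn ℝ ∞ h s) : ContDiffOn ℝ ∞ (fun t => cross3 (g t) (h t)) s := by
  have : (fun t => cross3 (g t) (h t)) =
      (EuclideanSpace.equiv (Fin 3) ℝ).symm ∘ (fun t i =>
        ![g t 1 * h t 2 - g t 2 * h t 1, g t 2 * h t 0 - g t 0 * h t 2,
          g t 0 * h t 1 - g t 1 * h t 0] i) := by
    funext t; rfl
  rw [this]
  refine (EuclideanSpace.equiv (Fin 3) ℝ).symm.contDiff.comp_contDiffOn ?_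
  apply contDiffOn_pi.2
  intro i
  fin_cases i <;> simp <;>
    exact ((contDiffOn_proj _ hg).mul (contDiffOn_proj _ hh)).sub
      ((contDiffOn_proj _ hg).mul (contDiffOn_proj _ hh))

lemma mvt1 {g g' : ℝ → ℝ} {M x y : ℝ} {s : Set ℝ} (hconv : Convex ℝ s)
    (hd : ∀ z ∈ s, HasDerivAt g (g' z) z) (hb : ∀ z ∈ s, |g' z| ≤ M)
    (hx : x ∈ s) (hy : y ∈ s) : |g y - g x| ≤ M * |y - x| := by
  have := hconv.norm_image_sub_le_of_norm_hasDerivWithin_le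
    (f' := g') (fun z hz => (hd z hz).hasDerivWithinAt) (C := M) hb hx hy
  simpa [Real.norm_eq_abs] using this

lemma mvt2 {g g' : ℝ → ℝ} {M a b t t' : ℝ} (hM : 0 ≤ M) (ht : t ∈ Icc a b) (ht' : t' ∈ Icc a b)
    (hd : ∀ x ∈ Icc a b, HasDerivAt g (g' x) x)
    (hlip : ∀ x ∈ Icc a b, |g' x - g' t| ≤ M * |x - t|) :
    |g t' - g t - g' t * (t' - t)| ≤ M * (t' - t) ^ 2 := by
  have hsub : Icc (min t t') (max t t') ⊆ Icc a b :=
    Icc_subset_Icc (le_min ht.1 ht'.1) (max_le ht.2 ht'.2)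
  have key : ∀ x ∈ Icc (min t t') (max t t'),
      |g' x - g' t| ≤ M * |t' - t| := by
    intro x hx
    refine (hlip x (hsub hx)).trans (mul_le_mul_of_nonneg_left ?_ hM)
    cases' le_total t t' with h h
    · rw [min_eq_left h, max_eq_right h] at hx
      rw [abs_of_nonneg (by linarith [hx.1]), abs_of_nonneg (by linarith)]
      linarith [hx.2]
    · rw [min_eq_right h, max_eq_left h] at hx
      rw [abs_of_nonpos (by linarith [hx.2]), abs_of_nonpos (by linarith)]
      linarith [hx.1]
  have hd' : ∀ x ∈ Icc (min t t') (max t t'),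
      HasDerivAt (fun x => g x - g' t * x) (g' x - g' t) x := by
    intro x hx
    exact ((hd x (hsub hx)).sub ((hasDerivAt_id' x).const_mul (g' t))).congr_deriv (by ring)
  have := mvt1 (convex_Icc _ _) hd' key
    (x := t) (y := t') ⟨min_le_left _ _, le_max_left _ _⟩
    ⟨min_le_right _ _, le_max_right _ _⟩
  calc |g t' - g t - g' t * (t' - t)|
      = |(g t' - g' t * t') - (g t - g' t * t)| := by ring_nf
    _ ≤ M * |t' - t| * |t' - t| := this
    _ = M * (t' - t) ^ 2 := by rw [mul_assoc, abs_mul_abs_self]; ring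

lemma inj_unif {a b δ : ℝ} {c : ℝ → E3} (hδ : 0 < δ) (hcont : Continuous c)
    (hinj : InjOn c (Icc a b)) :
    ∃ η > 0, ∀ t ∈ Icc a b, ∀ t' ∈ Icc a b, ‖c t - c t'‖ ≤ η → |t - t'| ≤ δ := by
  set K : Set (ℝ × ℝ) := (Icc a b ×ˢ Icc a b) ∩ {p | δ ≤ |p.1 - p.2|} with hK
  have hKc : IsCompact K := by
    refine (isCompact_Icc.prod isCompact_Icc).inter_right ?_
    exact isClosed_le continuous_const ((continuous_fst.sub continuous_snd).abs)
  rcases K.eq_empty_or_nonempty with hKe | hKne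
  · refine ⟨1, one_pos, fun t ht t' ht' _ => ?_⟩
    by_contra h
    push_neg at h
    have : (t, t') ∈ K := ⟨⟨ht, ht'⟩, le_of_lt h⟩
    rw [hKe] at this
    exact this
  · obtain ⟨p₀, hp₀K, hmin⟩ := hKc.exists_isMinOn hKne
      ((hcont.comp continuous_fst).sub (hcont.comp continuous_snd)).norm.continuousOn
    have hp₀pos : 0 < ‖c p₀.1 - c p₀.2‖ := by
      rw [norm_pos_iff, sub_ne_zero]
      intro hcc
      have heq : p₀.1 = p₀.2 := hinj hp₀K.1.1 hp₀K.1.2 hcc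
      have h2 := hp₀K.2
      simp only [Set.mem_setOf_eq, heq, sub_self, abs_zero] at h2
      linarith
    refine ⟨‖c p₀.1 - c p₀.2‖ / 2, by linarith, fun t ht t' ht' hle => ?_⟩
    by_contra h
    push_neg at h
    have hmem : (t, t') ∈ K := ⟨⟨ht, ht'⟩, le_of_lt h⟩
    have := hmin hmem
    simp only [Function.comp] at this
    have : ‖c p₀.1 - c p₀.2‖ ≤ ‖c t - c t'‖ := this
    linarith
open Real Set

lemma sinb_lower {x A s cth m CA : ℝ} (hm : 0 < m) (hx : m ≤ |x|) (hCA : 0 ≤ CA)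
    (hA : |A| ≤ CA) (hs : 0 < s) (heq : cth * x = A * s) (hsq : s ^ 2 + cth ^ 2 = 1) :
    m / Real.sqrt (m ^ 2 + CA ^ 2) ≤ s := by
  set D := Real.sqrt (m ^ 2 + CA ^ 2) with hD
  have hDpos : 0 < D := Real.sqrt_pos.2 (by positivity)
  have hDsq : D ^ 2 = m ^ 2 + CA ^ 2 := Real.sq_sqrt (by positivity)
  rw [div_le_iff₀ hDpos]
  have hx2 : m ^ 2 ≤ x ^ 2 := by nlinarith [sq_abs x, abs_nonneg x]
  have hA2 : A ^ 2 ≤ CA ^ 2 := by nlinarith [sq_abs A, abs_nonneg A]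
  have hs1 : s ^ 2 ≤ 1 := by nlinarith [sq_nonneg cth]
  have h0 : cth ^ 2 * x ^ 2 = A ^ 2 * s ^ 2 := by
    have := congrArg (fun z => z ^ 2) heq
    simpa [mul_pow] using this
  have hxeq : x ^ 2 = s ^ 2 * x ^ 2 + A ^ 2 * s ^ 2 := by
    linear_combination h0 - x ^ 2 * hsq
  have T1 : 0 ≤ (1 - s ^ 2) * (x ^ 2 - m ^ 2) :=
    mul_nonneg (by linarith) (by linarith)
  have T2 : 0 ≤ s ^ 2 * (CA ^ 2 - A ^ 2) := mul_nonneg (sq_nonneg s) (by linarith)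
  have hgoal2 : m ^ 2 ≤ s ^ 2 * (m ^ 2 + CA ^ 2) := by nlinarith [T1, T2, hxeq]
  have h3 : m ^ 2 ≤ (s * D) ^ 2 := by rw [mul_pow, hDsq]; exact hgoal2
  nlinarith [h3, mul_pos hs hDpos, hm]

set_option maxHeartbeats 2000000 in
/-- Lemma 1.1: for all sufficiently small `ε > 0`, the set
`S = {(t,v) ∈ Ω_ε : ∃ (t',v') ∈ Ω_ε, (t',v') ≠ (t,v), φ_f(t,v) = ψ_f(t',v')}`
has empty interior in `Ω_ε = I × (-ε, ε)`; here this is expressed by saying that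
no nonempty relatively open subset of `Ω_ε` is contained in `S`. -/
theorem stmt7 (a b : ℝ) (hab : a < b)
    (c : ℝ → E3) (hc : ContDiff ℝ ∞ c) (hinj : InjOn c (Icc a b))
    (harc : ∀ t ∈ Icc a b, ‖deriv c t‖ = 1)
    (κ : ℝ → ℝ) (hκ : ∀ t, κ t = ‖deriv (deriv c) t‖)
    (hκpos : ∀ t ∈ Icc a b, 0 < κ t)
    (e n bi : ℝ → E3) (τ : ℝ → ℝ)
    (he : ∀ t, e t = deriv c t)
    (hn : ∀ t, n t = (κ t)⁻¹ • deriv (deriv c) t)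
    (hbi : ∀ t, bi t = cross3 (e t) (n t))
    (hτ : ∀ t, τ t = ⟪deriv n t, bi t⟫)
    (α : ℝ → ℝ) (hα : ContDiff ℝ ∞ α)
    (hα1 : ∀ t ∈ Icc a b, 0 < |α t| ∧ |α t| < π / 2)
    -- `β` and `β̌` are determined by `cot β = (α' + τ)/(κ sin α)`,
    -- `cot β̌ = (α' - τ)/(κ sin α)` with values in `(0, π)`:
    (β βc : ℝ → ℝ)
    (hβ : ∀ t ∈ Icc a b, 0 < β t ∧ β t < π ∧
      cos (β t) * (κ t * sin (α t)) = (deriv α t + τ t) * sin (β t))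
    (hβc : ∀ t ∈ Icc a b, 0 < βc t ∧ βc t < π ∧
      cos (βc t) * (κ t * sin (α t)) = (deriv α t - τ t) * sin (βc t))
    (ξ ξc : ℝ → E3)
    (hξ : ∀ t, ξ t = cos (β t) • e t +
      sin (β t) • (cos (α t) • n t + sin (α t) • bi t))
    (hξc : ∀ t, ξc t = cos (βc t) • e t +
      sin (βc t) • (cos (-α t) • n t + sin (-α t) • bi t))
    (f fc : ℝ → ℝ → E3)
    (hf : ∀ t v, f t v = c t + v • ξ t)
    (hfc : ∀ t v, fc t v = c t + v • ξc t)
    (φ ψ : ℝ × ℝ → E3)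
    (hφ : ∀ t v, φ (t, v) = if 0 ≤ v then f t v else fc t v)
    (hψ : ∀ t v, ψ (t, v) = if 0 ≤ v then fc t v else f t v) :
    ∃ ε₀ > (0 : ℝ), ∀ ε : ℝ, 0 < ε → ε ≤ ε₀ →
      ∀ W : Set (ℝ × ℝ), IsOpen W →
        (∀ p ∈ W ∩ (Icc a b ×ˢ Ioo (-ε) ε),
          ∃ q ∈ Icc a b ×ˢ Ioo (-ε) ε, q ≠ p ∧ φ p = ψ q) →
        W ∩ (Icc a b ×ˢ Ioo (-ε) ε) = ∅ := by
  have hIne : (Icc a b).Nonempty := ⟨a, left_mem_Icc.2 hab.le⟩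
  have hIC : IsCompact (Icc a b) := isCompact_Icc
  have hcd : Differentiable ℝ c := hc.differentiable (by simp)
  have hc' : ContDiff ℝ ∞ (deriv c) := (contDiff_infty_iff_deriv.mp hc).2
  have hc'd : Differentiable ℝ (deriv c) := hc'.differentiable (by simp)
  have hc'' : ContDiff ℝ ∞ (deriv (deriv c)) := (contDiff_infty_iff_deriv.mp hc').2
  have hκcont : Continuous κ := by
    have hfe : κ = fun t => ‖deriv (deriv c) t‖ := funext hκ
    rw [hfe]; exact hc''.continuous.norm
  -- minimum of curvature
  obtain ⟨t₀, ht₀, hκmin⟩ := hIC.exists_isMinOn hIne hκcont.continuousOn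
  have hκ0 : 0 < κ t₀ := hκpos t₀ ht₀
  have hκlb : ∀ t ∈ Icc a b, κ t₀ ≤ κ t := fun t ht => hκmin ht
  set U : Set ℝ := κ ⁻¹' Ioi (κ t₀ / 2) with hUdef
  have hUo : IsOpen U := isOpen_Ioi.preimage hκcont
  have hIU : Icc a b ⊆ U := fun t ht => show κ t₀ / 2 < κ t by
    have := hκlb t ht; linarith
  have hU0 : ∀ t ∈ U, deriv (deriv c) t ≠ 0 := by
    intro t ht h0
    have h1 : κ t₀ / 2 < κ t := ht
    rw [hκ t, h0, norm_zero] at h1; linarith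
  -- smoothness of the frame on U
  have hne : e = deriv c := funext he
  have hnU : ContDiffOn ℝ ∞ n U := by
    have hfe : n = fun t => (‖deriv (deriv c) t‖)⁻¹ • deriv (deriv c) t :=
      funext fun t => by rw [hn t, hκ t]
    rw [hfe]
    exact ((hc''.contDiffOn.norm ℝ hU0).inv
      (fun t ht => norm_ne_zero_iff.2 (hU0 t ht))).smul hc''.contDiffOn
  have hbiU : ContDiffOn ℝ ∞ bi U := by
    have hfe : bi = fun t => cross3 (e t) (n t) := funext hbi
    rw [hfe]
    exact contDiffOn_cross3 (hne ▸ hc'.contDiffOn) hnU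
  -- orthogonality of the frame on Icc a b
  have hcc' : ∀ t ∈ Icc a b, ⟪deriv c t, deriv (deriv c) t⟫ = 0 := by
    intro t ht
    have hgd : ∀ x : ℝ, HasDerivAt (fun s => ⟪deriv c s, deriv c s⟫)
        (⟪deriv c x, deriv (deriv c) x⟫ + ⟪deriv (deriv c) x, deriv c x⟫) x :=
      fun x => HasDerivAt.inner ℝ ((hc'd x).hasDerivAt) ((hc'd x).hasDerivAt)
    have h1 : HasDerivWithinAt (fun s => ⟪deriv c s, deriv c s⟫)
        (⟪deriv c t, deriv (deriv c) t⟫ + ⟪deriv (deriv c) t, deriv c t⟫) (Icc a b) t :=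
      (hgd t).hasDerivWithinAt
    have h2 : HasDerivWithinAt (fun s => ⟪deriv c s, deriv c s⟫) 0 (Icc a b) t := by
      refine (hasDerivWithinAt_const t (Icc a b) (1:ℝ)).congr (fun s hs => ?_) ?_
      · rw [real_inner_self_eq_norm_mul_norm, harc s hs]; norm_num
      · rw [real_inner_self_eq_norm_mul_norm, harc t ht]; norm_num
    have hu := (uniqueDiffOn_Icc hab) t ht
    have heq0 := (h1.derivWithin hu).symm.trans (h2.derivWithin hu)
    have hcomm : ⟪deriv (deriv c) t, deriv c t⟫ = ⟪deriv c t, deriv (deriv c) t⟫ :=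
      real_inner_comm _ _
    linarith [heq0, hcomm.symm ▸ heq0]
  have hee1 : ∀ t ∈ Icc a b, ⟪e t, e t⟫ = 1 := fun t ht => by
    rw [he t, real_inner_self_eq_norm_mul_norm, harc t ht]; norm_num
  have hnorme : ∀ t ∈ Icc a b, ‖e t‖ = 1 := fun t ht => by rw [he t]; exact harc t ht
  have hen : ∀ t ∈ Icc a b, ⟪e t, n t⟫ = 0 := fun t ht => by
    rw [he t, hn t, real_inner_smul_right, hcc' t ht, mul_zero]
  have hnn1 : ∀ t ∈ Icc a b, ⟪n t, n t⟫ = 1 := fun t ht => by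
    have hκne : κ t ≠ 0 := (hκpos t ht).ne'
    rw [hn t, real_inner_smul_left, real_inner_smul_right,
      real_inner_self_eq_norm_mul_norm, ← hκ t]
    field_simp
  have hnormn : ∀ t ∈ Icc a b, ‖n t‖ = 1 := fun t ht => by
    have h := hnn1 t ht; rw [real_inner_self_eq_norm_mul_norm] at h
    nlinarith [norm_nonneg (n t)]
  have hbb1 : ∀ t ∈ Icc a b, ⟪bi t, bi t⟫ = 1 := fun t ht => by
    rw [hbi t, inner_cross_self, hee1 t ht, hnn1 t ht, hen t ht]; norm_num
  have hnormbi : ∀ t ∈ Icc a b, ‖bi t‖ = 1 := fun t ht => by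
    have h := hbb1 t ht; rw [real_inner_self_eq_norm_mul_norm] at h
    nlinarith [norm_nonneg (bi t)]
  have heb : ∀ t : ℝ, ⟪e t, bi t⟫ = 0 := fun t => by
    rw [hbi t]; exact inner_cross_left _ _
  have hnb : ∀ t : ℝ, ⟪n t, bi t⟫ = 0 := fun t => by
    rw [hbi t]; exact inner_cross_right _ _
  -- inner products of the rulings with the binormal
  have hξb : ∀ t ∈ Icc a b, ⟪ξ t, bi t⟫ = sin (β t) * sin (α t) := fun t ht => by
    rw [hξ t, inner_add_left, real_inner_smul_left, real_inner_smul_left,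
      inner_add_left, real_inner_smul_left, real_inner_smul_left,
      heb t, hnb t, hbb1 t ht]; ring
  have hξcb : ∀ t ∈ Icc a b, ⟪ξc t, bi t⟫ = -(sin (βc t) * sin (α t)) := fun t ht => by
    rw [hξc t, inner_add_left, real_inner_smul_left, real_inner_smul_left,
      inner_add_left, real_inner_smul_left, real_inner_smul_left,
      heb t, hnb t, hbb1 t ht, Real.sin_neg]; ring
  have hξn3 : ∀ t ∈ Icc a b, ‖ξ t‖ ≤ 3 := fun t ht => by
    rw [hξ t]
    refine (norm_add_le _ _).trans ?_
    rw [norm_smul, norm_smul, hnorme t ht]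
    have h1 : ‖cos (α t) • n t + sin (α t) • bi t‖ ≤ 2 := by
      refine (norm_add_le _ _).trans ?_
      rw [norm_smul, norm_smul, hnormn t ht, hnormbi t ht,
        Real.norm_eq_abs, Real.norm_eq_abs]
      nlinarith [abs_cos_le_one (α t), abs_sin_le_one (α t)]
    rw [Real.norm_eq_abs, Real.norm_eq_abs]
    nlinarith [abs_cos_le_one (β t), abs_sin_le_one (β t), abs_nonneg (sin (β t)),
      abs_nonneg (cos (β t)), norm_nonneg (cos (α t) • n t + sin (α t) • bi t)]
  have hξcn3 : ∀ t ∈ Icc a b, ‖ξc t‖ ≤ 3 := fun t ht => by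
    rw [hξc t]
    refine (norm_add_le _ _).trans ?_
    rw [norm_smul, norm_smul, hnorme t ht]
    have h1 : ‖cos (-α t) • n t + sin (-α t) • bi t‖ ≤ 2 := by
      refine (norm_add_le _ _).trans ?_
      rw [norm_smul, norm_smul, hnormn t ht, hnormbi t ht,
        Real.norm_eq_abs, Real.norm_eq_abs]
      nlinarith [abs_cos_le_one (-α t), abs_sin_le_one (-α t)]
    rw [Real.norm_eq_abs, Real.norm_eq_abs]
    nlinarith [abs_cos_le_one (βc t), abs_sin_le_one (βc t), abs_nonneg (sin (βc t)),
      abs_nonneg (cos (βc t)), norm_nonneg (cos (-α t) • n t + sin (-α t) • bi t)]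
  -- global constants
  obtain ⟨M₀, hM₀⟩ := hIC.exists_bound_of_continuousOn hc''.continuous.continuousOn
  set M := max M₀ 1 with hMdef
  have hM1 : (1:ℝ) ≤ M := le_max_right _ _
  have hMpos : (0:ℝ) < M := by linarith
  have hMb : ∀ x ∈ Icc a b, ‖deriv (deriv c) x‖ ≤ M := fun x hx =>
    (hM₀ x hx).trans (le_max_left _ _)
  have hbider : ContinuousOn (deriv bi) U :=
    hbiU.continuousOn_deriv_of_isOpen hUo (by exact_mod_cast le_top)
  obtain ⟨L₀, hL₀⟩ := hIC.exists_bound_of_continuousOn (hbider.mono hIU)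
  set L := max L₀ 0 with hLdef
  have hLnn : (0:ℝ) ≤ L := le_max_right _ _
  have hbidiff : ∀ x ∈ Icc a b, DifferentiableAt ℝ bi x := fun x hx =>
    (hbiU.differentiableOn (by simp)).differentiableAt
      (hUo.mem_nhds (hIU hx))
  have hbiLip : ∀ x ∈ Icc a b, ∀ y ∈ Icc a b, ‖bi y - bi x‖ ≤ L * |y - x| := by
    intro x hx y hy
    have := (convex_Icc a b).norm_image_sub_le_of_norm_hasDerivWithin_le
      (f' := deriv bi) (fun z hz => ((hbidiff z hz).hasDerivAt).hasDerivWithinAt)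
      (C := L) (fun z hz => (hL₀ z hz).trans (le_max_left _ _)) hx hy
    simpa [Real.norm_eq_abs] using this
  have hnder : ContinuousOn (deriv n) U :=
    hnU.continuousOn_deriv_of_isOpen hUo (by exact_mod_cast le_top)
  obtain ⟨Cn, hCn⟩ := hIC.exists_bound_of_continuousOn (hnder.mono hIU)
  have hτb : ∀ t ∈ Icc a b, |τ t| ≤ max Cn 0 := fun t ht => by
    rw [hτ t]
    refine (abs_real_inner_le_norm _ _).trans ?_
    rw [hnormbi t ht, mul_one]
    exact (hCn t ht).trans (le_max_left _ _)
  have hαd : Continuous (deriv α) := ((contDiff_infty_iff_deriv.mp hα).2).continuous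
  obtain ⟨Ca, hCa⟩ := hIC.exists_bound_of_continuousOn hαd.continuousOn
  set CA := max Ca 0 + max Cn 0 with hCAdef
  have hCAnn : (0:ℝ) ≤ CA := by
    have : (0:ℝ) ≤ max Ca 0 := le_max_right _ _
    have : (0:ℝ) ≤ max Cn 0 := le_max_right _ _
    rw [hCAdef]; linarith [le_max_right Ca (0:ℝ), le_max_right Cn (0:ℝ)]
  have hAbound : ∀ t ∈ Icc a b, |deriv α t + τ t| ≤ CA ∧ |deriv α t - τ t| ≤ CA := by
    intro t ht
    have h1 : |deriv α t| ≤ max Ca 0 := by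
      have := hCa t ht; rw [Real.norm_eq_abs] at this
      exact this.trans (le_max_left _ _)
    have h2 := hτb t ht
    constructor
    · exact (abs_add_le _ _).trans (by rw [hCAdef]; linarith)
    · refine le_trans ?_ (le_refl CA)
      calc |deriv α t - τ t| = |deriv α t + -τ t| := by ring_nf
        _ ≤ |deriv α t| + |-τ t| := abs_add_le _ _
        _ = |deriv α t| + |τ t| := by rw [abs_neg]
        _ ≤ CA := by rw [hCAdef]; linarith
  -- lower bound for |sin α|
  have hsinα_pos : ∀ t ∈ Icc a b, 0 < |sin (α t)| := by
    intro t ht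
    rcases hα1 t ht with ⟨h0, h2⟩
    rcases abs_lt.1 h2 with ⟨hl, hr⟩
    rcases (abs_pos.1 h0).lt_or_gt with hlt | hgt
    · have : sin (α t) < 0 :=
        sin_neg_of_neg_of_neg_pi_lt hlt (by nlinarith [pi_pos])
      exact abs_pos.2 this.ne
    · have : 0 < sin (α t) :=
        sin_pos_of_pos_of_lt_pi hgt (by nlinarith [pi_pos])
      exact abs_pos.2 this.ne'
  have hsinαcont : Continuous fun t => |sin (α t)| :=
    (Real.continuous_sin.comp hα.continuous).abs
  obtain ⟨t₁, ht₁, hsamin⟩ := hIC.exists_isMinOn hIne hsinαcont.continuousOn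
  set sa := |sin (α t₁)| with hsadef
  have hsa_pos : 0 < sa := hsinα_pos t₁ ht₁
  have hsa_le : ∀ t ∈ Icc a b, sa ≤ |sin (α t)| := fun t ht => hsamin ht
  set m := κ t₀ * sa with hmdef
  have hm_pos : 0 < m := mul_pos hκ0 hsa_pos
  have hm_le : ∀ t ∈ Icc a b, m ≤ |κ t * sin (α t)| := by
    intro t ht
    rw [abs_mul, abs_of_pos (hκpos t ht)]
    exact mul_le_mul (hκlb t ht) (hsa_le t ht) hsa_pos.le (hκpos t ht).le
  set s0 := m / Real.sqrt (m^2 + CA^2) with hs0def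
  have hs0_pos : 0 < s0 := div_pos hm_pos (Real.sqrt_pos.2 (by positivity))
  have hsinβ_lb : ∀ t ∈ Icc a b, s0 ≤ sin (β t) := by
    intro t ht
    obtain ⟨hb0, hbπ, hbeq⟩ := hβ t ht
    exact sinb_lower hm_pos (hm_le t ht) hCAnn (hAbound t ht).1
      (sin_pos_of_pos_of_lt_pi hb0 hbπ) hbeq (sin_sq_add_cos_sq (β t))
  have hsinβc_lb : ∀ t ∈ Icc a b, s0 ≤ sin (βc t) := by
    intro t ht
    obtain ⟨hb0, hbπ, hbeq⟩ := hβc t ht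
    exact sinb_lower hm_pos (hm_le t ht) hCAnn (hAbound t ht).2
      (sin_pos_of_pos_of_lt_pi hb0 hbπ) hbeq (sin_sq_add_cos_sq (βc t))
  set ρ := s0 * sa with hρdef
  have hρ_pos : 0 < ρ := mul_pos hs0_pos hsa_pos
  have hσ : ∀ t ∈ Icc a b, ρ ≤ sin (β t) * |sin (α t)| := fun t ht =>
    mul_le_mul (hsinβ_lb t ht) (hsa_le t ht) hsa_pos.le
      (le_trans hs0_pos.le (hsinβ_lb t ht))
  have hσc : ∀ t ∈ Icc a b, ρ ≤ sin (βc t) * |sin (α t)| := fun t ht =>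
    mul_le_mul (hsinβc_lb t ht) (hsa_le t ht) hsa_pos.le
      (le_trans hs0_pos.le (hsinβc_lb t ht))
  -- the angle α has constant sign on the interval
  obtain ⟨sgn, hsgn_pm, hsgn⟩ : ∃ sgn : ℝ, (sgn = 1 ∨ sgn = -1) ∧
      ∀ t ∈ Icc a b, sgn * sin (α t) = |sin (α t)| := by
    by_cases hpos : ∀ t ∈ Icc a b, 0 < α t
    · refine ⟨1, Or.inl rfl, fun t ht => ?_⟩
      rcases abs_lt.1 (hα1 t ht).2 with ⟨hl, hr⟩
      have : 0 < sin (α t) :=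
        sin_pos_of_pos_of_lt_pi (hpos t ht) (by nlinarith [pi_pos])
      rw [abs_of_pos this, one_mul]
    · push_neg at hpos
      obtain ⟨t₂, ht₂, hneg2⟩ := hpos
      have hα2ne : α t₂ ≠ 0 := abs_pos.1 (hα1 t₂ ht₂).1
      have hα2neg : α t₂ < 0 := lt_of_le_of_ne hneg2 hα2ne
      have hallneg : ∀ t ∈ Icc a b, α t < 0 := by
        intro t ht
        by_contra hge
        push_neg at hge
        have hpos_t : 0 < α t := hge.lt_of_ne (Ne.symm (abs_pos.1 (hα1 t ht).1))
        have hsub : uIcc t₂ t ⊆ Icc a b := by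
          rw [uIcc]
          exact Icc_subset_Icc (le_min ht₂.1 ht.1) (max_le ht₂.2 ht.2)
        have h0mem : (0:ℝ) ∈ uIcc (α t₂) (α t) :=
          mem_uIcc.2 (Or.inl ⟨hα2neg.le, hpos_t.le⟩)
        obtain ⟨x, hx, hαx⟩ :=
          intermediate_value_uIcc (hα.continuous.continuousOn) h0mem
        have := (hα1 x (hsub hx)).1
        rw [hαx] at this
        simp at this
      refine ⟨-1, Or.inr rfl, fun t ht => ?_⟩
      rcases abs_lt.1 (hα1 t ht).2 with ⟨hl, hr⟩
      have : sin (α t) < 0 :=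
        sin_neg_of_neg_of_neg_pi_lt (hallneg t ht) (by nlinarith [pi_pos])
      rw [abs_of_neg this]; ring
  have habs_sgn : |sgn| = 1 := by rcases hsgn_pm with h | h <;> rw [h] <;> norm_num
  -- second-order Taylor-type estimate
  have taylor : ∀ u : E3, ‖u‖ = 1 → ∀ t ∈ Icc a b, ∀ t' ∈ Icc a b,
      |⟪c t' - c t, u⟫ - ⟪deriv c t, u⟫ * (t' - t)| ≤ M * (t' - t)^2 := by
    intro u hu t ht t' ht'
    have hd : ∀ x ∈ Icc a b, HasDerivAt (fun s => ⟪c s, u⟫) (⟪deriv c x, u⟫) x := by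
      intro x _
      have := HasDerivAt.inner ℝ ((hcd x).hasDerivAt) (hasDerivAt_const x u)
      simpa using this
    have hd' : ∀ x : ℝ, HasDerivAt (fun s => ⟪deriv c s, u⟫)
        (⟪deriv (deriv c) x, u⟫) x := by
      intro x
      have := HasDerivAt.inner ℝ ((hc'd x).hasDerivAt) (hasDerivAt_const x u)
      simpa using this
    have hlip : ∀ x ∈ Icc a b, |⟪deriv c x, u⟫ - ⟪deriv c t, u⟫| ≤ M * |x - t| := by
      intro x hx
      refine mvt1 (convex_Icc a b) (fun z _ => hd' z) (fun z hz => ?_) ht hx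
      refine (abs_real_inner_le_norm _ _).trans ?_
      rw [hu, mul_one]
      exact hMb z hz
    have h2 := mvt2 hMpos.le ht ht' hd hlip
    simpa [inner_sub_left] using h2
  -- uniform injectivity modulus
  obtain ⟨η, hη_pos, hηP⟩ := inj_unif (δ := 1/(2*M)) (by positivity) hc.continuous hinj
  set K := 36*M + 18*L with hKdef
  have hK_pos : 0 < K := by nlinarith
  refine ⟨min (ρ/(4*K)) (η/6), lt_min (by positivity) (by positivity), ?_⟩
  intro ε hε hεle W hWopen hWS
  have hερ : ε ≤ ρ/(4*K) := hεle.trans (min_le_left _ _)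
  have hε6 : 6*ε ≤ η := by
    have := hεle.trans (min_le_right _ _); linarith
  have abs_sub_le3 : ∀ x y : ℝ, |x - y| ≤ |x| + |y| := fun x y => by
    rw [sub_eq_add_neg]
    exact (abs_add_le _ _).trans (by rw [abs_neg])
  -- the key quantitative separation lemma
  have key : ∀ t ∈ Icc a b, ∀ t' ∈ Icc a b, ∀ v v' : ℝ, |v| < ε → |v'| < ε →
      ∀ P Q : ℝ → E3, ‖P t‖ ≤ 3 → ‖Q t'‖ ≤ 3 →
      |v| * ρ ≤ sgn * (v * ⟪P t, bi t⟫) →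
      sgn * (v' * ⟪Q t', bi t'⟫) ≤ -(|v'| * ρ) →
      c t + v • P t = c t' + v' • Q t' → t = t' ∧ v = 0 ∧ v' = 0 := by
    intro t ht t' ht' v v' hv hv' P Q hP3 hQ3 hPb hQb hEq
    set Sv := |v| + |v'| with hSv
    have hSv_nn : 0 ≤ Sv := by positivity
    have hSv2ε : Sv < 2*ε := by rw [hSv]; linarith only [hv, hv']
    have hE : c t' - c t = v • P t - v' • Q t' := by
      rw [sub_eq_sub_iff_add_eq_add, ← hEq]; abel
    have hnormE : ‖c t' - c t‖ ≤ 3*Sv := by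
      rw [hE]
      refine (norm_sub_le _ _).trans ?_
      rw [norm_smul, norm_smul, Real.norm_eq_abs, Real.norm_eq_abs]
      have h1 : |v| * ‖P t‖ ≤ |v| * 3 := mul_le_mul_of_nonneg_left hP3 (abs_nonneg v)
      have h2 : |v'| * ‖Q t'‖ ≤ |v'| * 3 := mul_le_mul_of_nonneg_left hQ3 (abs_nonneg v')
      rw [hSv]; linarith only [h1, h2]
    have hdist : |t - t'| ≤ 1/(2*M) := by
      refine hηP t ht t' ht' ?_
      calc ‖c t - c t'‖ = ‖c t' - c t‖ := norm_sub_rev _ _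
        _ ≤ 3*Sv := hnormE
        _ ≤ η := by linarith only [hSv2ε, hε6, hε]
    have hTe := taylor (e t) (hnorme t ht) t ht t' ht'
    have h1e : ⟪deriv c t, e t⟫ = 1 := by rw [← he t]; exact hee1 t ht
    rw [h1e, one_mul] at hTe
    have hXe : ⟪c t' - c t, e t⟫ = v * ⟪P t, e t⟫ - v' * ⟪Q t', e t⟫ := by
      rw [hE, inner_sub_left, real_inner_smul_left, real_inner_smul_left]
    have hXe_abs : |⟪c t' - c t, e t⟫| ≤ 3*Sv := by
      rw [hXe]
      have h1 : |⟪P t, e t⟫| ≤ 3 := (abs_real_inner_le_norm _ _).trans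
        (by rw [hnorme t ht, mul_one]; exact hP3)
      have h2 : |⟪Q t', e t⟫| ≤ 3 := (abs_real_inner_le_norm _ _).trans
        (by rw [hnorme t ht, mul_one]; exact hQ3)
      refine (abs_sub_le3 _ _).trans ?_
      rw [abs_mul, abs_mul, hSv]
      have h3 : |v| * |⟪P t, e t⟫| ≤ |v| * 3 :=
        mul_le_mul_of_nonneg_left h1 (abs_nonneg v)
      have h4 : |v'| * |⟪Q t', e t⟫| ≤ |v'| * 3 :=
        mul_le_mul_of_nonneg_left h2 (abs_nonneg v')
      linarith only [h3, h4]
    have habs_tt : |t' - t| ≤ M*(t'-t)^2 + 3*Sv := by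
      calc |t' - t|
          = |⟪c t' - c t, e t⟫ - (⟪c t' - c t, e t⟫ - (t'-t))| := by ring_nf
        _ ≤ |⟪c t' - c t, e t⟫| + |⟪c t' - c t, e t⟫ - (t'-t)| := abs_sub_le3 _ _
        _ ≤ 3*Sv + M*(t'-t)^2 := add_le_add hXe_abs hTe
        _ = M*(t'-t)^2 + 3*Sv := by ring
    have hsqe : M*(t'-t)^2 ≤ |t' - t| / 2 := by
      have h1 : |t' - t| ≤ 1/(2*M) := by rw [abs_sub_comm]; exact hdist
      have h2 : (t'-t)^2 = |t'-t| * |t'-t| := by rw [abs_mul_abs_self, sq]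
      have h3 : M*|t'-t| ≤ M*(1/(2*M)) := mul_le_mul_of_nonneg_left h1 hMpos.le
      have h4 : M*(1/(2*M)) = 1/2 := by
        rw [mul_one_div, div_eq_div_iff (by positivity) (by norm_num : (2:ℝ) ≠ 0)]
        ring
      nlinarith only [h2, h3, h4, abs_nonneg (t'-t), hMpos]
    have htt6 : |t' - t| ≤ 6*Sv := by linarith only [habs_tt, hsqe]
    have hTb := taylor (bi t) (hnormbi t ht) t ht t' ht'
    have h0b : ⟪deriv c t, bi t⟫ = 0 := by rw [← he t]; exact heb t
    rw [h0b, zero_mul, sub_zero] at hTb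
    have hXb : ⟪c t' - c t, bi t⟫ = v * ⟪P t, bi t⟫ - v' * ⟪Q t', bi t⟫ := by
      rw [hE, inner_sub_left, real_inner_smul_left, real_inner_smul_left]
    have hQsplit : ⟪Q t', bi t⟫ = ⟪Q t', bi t'⟫ + ⟪Q t', bi t - bi t'⟫ := by
      rw [inner_sub_right]; ring
    have hcorr : |⟪Q t', bi t - bi t'⟫| ≤ 3 * (L * |t - t'|) := by
      refine (abs_real_inner_le_norm _ _).trans ?_
      have h1 := hbiLip t' ht' t ht
      nlinarith only [hQ3, h1, norm_nonneg (Q t'), norm_nonneg (bi t - bi t'),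
        mul_nonneg hLnn (abs_nonneg (t - t))]
    have hmain : ρ * Sv ≤ M*(t'-t)^2 + |v'| * (3 * (L * |t - t'|)) := by
      have h1 : sgn * ⟪c t' - c t, bi t⟫
          = sgn * (v * ⟪P t, bi t⟫) - sgn * (v' * ⟪Q t', bi t'⟫)
            - sgn * (v' * ⟪Q t', bi t - bi t'⟫) := by
        rw [hXb, hQsplit]; ring
      have h2 : |sgn * ⟪c t' - c t, bi t⟫| ≤ M*(t'-t)^2 := by
        rw [abs_mul, habs_sgn, one_mul]; exact hTb
      have h3 : |sgn * (v' * ⟪Q t', bi t - bi t'⟫)| ≤ |v'| * (3*(L*|t-t'|)) := by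
        rw [abs_mul, habs_sgn, one_mul, abs_mul]
        exact mul_le_mul_of_nonneg_left hcorr (abs_nonneg v')
      have h5 := abs_le.1 h2
      have h6 := abs_le.1 h3
      have h7 : ρ * Sv = |v| * ρ + |v'| * ρ := by rw [hSv]; ring
      linarith only [hPb, hQb, h1, h5.1, h5.2, h6.1, h6.2, h7]
    have hfin : Sv = 0 := by
      have hq2 : (t'-t)^2 ≤ 36 * Sv^2 := by
        have h := mul_self_le_mul_self (abs_nonneg (t'-t)) htt6
        rw [abs_mul_abs_self] at h
        have e1 : (t'-t)^2 = (t'-t) * (t'-t) := sq (t'-t)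
        have e2 : (6*Sv) * (6*Sv) = 36 * Sv^2 := by ring
        linarith only [h, e1, e2]
      have h8 : ρ * Sv ≤ K * Sv^2 := by
        have h9 : |t - t'| ≤ 6*Sv := by rw [abs_sub_comm]; exact htt6
        have h10 : |v'| ≤ Sv := by rw [hSv]; linarith only [abs_nonneg v]
        have hA1 : L * |t - t'| ≤ L * (6*Sv) := mul_le_mul_of_nonneg_left h9 hLnn
        have hA2 : (0:ℝ) ≤ L * |t - t'| := mul_nonneg hLnn (abs_nonneg _)
        have h11 : |v'| * (3 * (L * |t - t'|)) ≤ Sv * (3 * (L * (6*Sv))) :=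
          mul_le_mul h10 (by linarith only [hA1]) (by linarith only [hA2]) hSv_nn
        have h12 : M*(t'-t)^2 ≤ M * (36 * Sv^2) :=
          mul_le_mul_of_nonneg_left hq2 hMpos.le
        calc ρ * Sv ≤ M*(t'-t)^2 + |v'| * (3 * (L * |t - t'|)) := hmain
          _ ≤ M * (36 * Sv^2) + Sv * (3 * (L * (6*Sv))) := add_le_add h12 h11
          _ = K * Sv^2 := by rw [hKdef]; ring
      have hKer : 4*K*ε ≤ ρ := by
        have h := (le_div_iff₀ (by positivity : (0:ℝ) < 4*K)).1 hερ
        linarith only [h]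
      have h13 : 2*(K*Sv) ≤ ρ := by
        nlinarith only [hSv2ε, hKer, hK_pos]
      have h15 : Sv ≤ 0 := by
        by_contra hSvpos
        push_neg at hSvpos
        nlinarith only [h8, h13, hSvpos, hK_pos,
          mul_pos (mul_pos hK_pos hSvpos) hSvpos]
      exact le_antisymm h15 hSv_nn
    have hv0 : v = 0 := by
      have : |v| = 0 := by
        have := abs_nonneg v; have := abs_nonneg v'
        rw [hSv] at hfin; linarith only [hfin, abs_nonneg v, abs_nonneg v']
      exact abs_eq_zero.1 this
    have hv'0 : v' = 0 := by
      have : |v'| = 0 := by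
        have := abs_nonneg v; have := abs_nonneg v'
        rw [hSv] at hfin; linarith only [hfin, abs_nonneg v, abs_nonneg v']
      exact abs_eq_zero.1 this
    have htt' : t = t' := by
      rw [hfin] at htt6
      have h1 : |t' - t| = 0 := le_antisymm (by linarith only [htt6]) (abs_nonneg _)
      have h2 := sub_eq_zero.1 (abs_eq_zero.1 h1)
      linarith only [h2]
    exact ⟨htt', hv0, hv'0⟩
  -- wrap up: no point of W ∩ Ω can exist
  rw [eq_empty_iff_forall_notMem]
  rintro ⟨t, v⟩ hp
  obtain ⟨q, hqΩ, hqne, hfψ⟩ := hWS _ hp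
  obtain ⟨t', v'⟩ := q
  have ht : t ∈ Icc a b := hp.2.1
  have hv : |v| < ε := abs_lt.2 hp.2.2
  have ht' : t' ∈ Icc a b := hqΩ.1
  have hv' : |v'| < ε := abs_lt.2 hqΩ.2
  rw [hφ t v, hψ t' v'] at hfψ
  rcases le_or_gt 0 v with hv0 | hv0 <;> rcases le_or_gt 0 v' with hv'0 | hv'0
  · -- v ≥ 0, v' ≥ 0 : f t v = fc t' v'
    rw [if_pos hv0, if_pos hv'0, hf, hfc] at hfψ
    have hPb : |v| * ρ ≤ sgn * (v * ⟪ξ t, bi t⟫) := by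
      rw [hξb t ht, abs_of_nonneg hv0]
      calc v * ρ ≤ v * (sin (β t) * |sin (α t)|) :=
            mul_le_mul_of_nonneg_left (hσ t ht) hv0
        _ = sgn * (v * (sin (β t) * sin (α t))) := by rw [← hsgn t ht]; ring
    have hQb : sgn * (v' * ⟪ξc t', bi t'⟫) ≤ -(|v'| * ρ) := by
      rw [hξcb t' ht', abs_of_nonneg hv'0]
      calc sgn * (v' * -(sin (βc t') * sin (α t')))
          = -(v' * (sin (βc t') * (sgn * sin (α t')))) := by ring
        _ = -(v' * (sin (βc t') * |sin (α t')|)) := by rw [hsgn t' ht']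
        _ ≤ -(v' * ρ) := by
            have := mul_le_mul_of_nonneg_left (hσc t' ht') hv'0; linarith only [this]
    obtain ⟨htt, hveq, hv'eq⟩ := key t ht t' ht' v v' hv hv' ξ ξc
      (hξn3 t ht) (hξcn3 t' ht') hPb hQb hfψ
    exact hqne (by rw [hv'eq, hveq, htt])
  · -- v ≥ 0, v' < 0 : f t v = f t' v'
    rw [if_pos hv0, if_neg (not_le.2 hv'0), hf, hf] at hfψ
    have hPb : |v| * ρ ≤ sgn * (v * ⟪ξ t, bi t⟫) := by
      rw [hξb t ht, abs_of_nonneg hv0]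
      calc v * ρ ≤ v * (sin (β t) * |sin (α t)|) :=
            mul_le_mul_of_nonneg_left (hσ t ht) hv0
        _ = sgn * (v * (sin (β t) * sin (α t))) := by rw [← hsgn t ht]; ring
    have hQb : sgn * (v' * ⟪ξ t', bi t'⟫) ≤ -(|v'| * ρ) := by
      rw [hξb t' ht', abs_of_neg hv'0]
      calc sgn * (v' * (sin (β t') * sin (α t')))
          = v' * (sin (β t') * (sgn * sin (α t'))) := by ring
        _ = v' * (sin (β t') * |sin (α t')|) := by rw [hsgn t' ht']
        _ ≤ v' * ρ := by nlinarith only [hσ t' ht', hv'0]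
        _ = -(-v' * ρ) := by ring
    obtain ⟨htt, hveq, hv'eq⟩ := key t ht t' ht' v v' hv hv' ξ ξ
      (hξn3 t ht) (hξn3 t' ht') hPb hQb hfψ
    exact hqne (by rw [hv'eq, hveq, htt])
  · -- v < 0, v' ≥ 0 : fc t v = fc t' v'
    rw [if_neg (not_le.2 hv0), if_pos hv'0, hfc, hfc] at hfψ
    have hPb : |v| * ρ ≤ sgn * (v * ⟪ξc t, bi t⟫) := by
      rw [hξcb t ht, abs_of_neg hv0]
      calc -v * ρ ≤ -v * (sin (βc t) * |sin (α t)|) :=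
            mul_le_mul_of_nonneg_left (hσc t ht) (by linarith)
        _ = sgn * (v * -(sin (βc t) * sin (α t))) := by rw [← hsgn t ht]; ring
    have hQb : sgn * (v' * ⟪ξc t', bi t'⟫) ≤ -(|v'| * ρ) := by
      rw [hξcb t' ht', abs_of_nonneg hv'0]
      calc sgn * (v' * -(sin (βc t') * sin (α t')))
          = -(v' * (sin (βc t') * (sgn * sin (α t')))) := by ring
        _ = -(v' * (sin (βc t') * |sin (α t')|)) := by rw [hsgn t' ht']
        _ ≤ -(v' * ρ) := by
            have := mul_le_mul_of_nonneg_left (hσc t' ht') hv'0; linarith only [this]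
    obtain ⟨htt, hveq, hv'eq⟩ := key t ht t' ht' v v' hv hv' ξc ξc
      (hξcn3 t ht) (hξcn3 t' ht') hPb hQb hfψ
    exact hqne (by rw [hv'eq, hveq, htt])
  · -- v < 0, v' < 0 : fc t v = f t' v'
    rw [if_neg (not_le.2 hv0), if_neg (not_le.2 hv'0), hfc, hf] at hfψ
    have hPb : |v| * ρ ≤ sgn * (v * ⟪ξc t, bi t⟫) := by
      rw [hξcb t ht, abs_of_neg hv0]
      calc -v * ρ ≤ -v * (sin (βc t) * |sin (α t)|) :=
            mul_le_mul_of_nonneg_left (hσc t ht) (by linarith)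
        _ = sgn * (v * -(sin (βc t) * sin (α t))) := by rw [← hsgn t ht]; ring
    have hQb : sgn * (v' * ⟪ξ t', bi t'⟫) ≤ -(|v'| * ρ) := by
      rw [hξb t' ht', abs_of_neg hv'0]
      calc sgn * (v' * (sin (β t') * sin (α t')))
          = v' * (sin (β t') * (sgn * sin (α t'))) := by ring
        _ = v' * (sin (β t') * |sin (α t')|) := by rw [hsgn t' ht']
        _ ≤ v' * ρ := by nlinarith only [hσ t' ht', hv'0]
        _ = -(-v' * ρ) := by ring
    obtain ⟨htt, hveq, hv'eq⟩ := key t ht t' ht' v v' hv hv' ξc ξ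
      (hξcn3 t ht) (hξn3 t' ht') hPb hQb hfψ
    exact hqne (by rw [hv'eq, hveq, htt])
end
end

section
/- Let c₁(t) := (cos t, sin t, 0) for t ∈ [−π/6, π/6] (a unit-speed circular arc with curvature 1 and torsion 0), let α : [−π/6, π/6] → (0, π/2) be smooth, and let β : [−π/6, π/6] → (0, π) be determined by cot β = α'/sin α. Let f^α(t,v) := c₁(t) + v(cos β(t) e(t) + sin β(t)(cos α(t) n(t) + sin α(t) b(t))) and f^{−α}(t,v) := c₁(t) + v(cos β(t) e(t) + sin β(t)(cos α(t) n(t) − sin α(t) b(t))), where e := c₁', n := c₁''/|c₁''|, b := e × n. Then f^{−α} = S ∘ f^α, where S is the isometry S(x,y,z) := (x, y, −z); in particular the strip f^{−α} is congruent to f^α. -/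
noncomputable section
open Real Set
open scoped ContDiff

local notation "⟪" x ", " y "⟫" => @inner ℝ _ _ x y

/-- The circular arc `c₁(t) = (cos t, sin t, 0)`. -/
def c₁ : ℝ → E3 := fun t =>
  (WithLp.equiv 2 (Fin 3 → ℝ)).symm ![cos t, sin t, 0]

/-- Unit tangent of a unit-speed curve. -/
def tang (γ : ℝ → E3) : ℝ → E3 := fun t => deriv γ t

/-- Curvature `κ = |γ''|` of a unit-speed curve. -/
def curv (γ : ℝ → E3) : ℝ → ℝ := fun t => ‖deriv (deriv γ) t‖

/-- Unit principal normal `n = γ''/κ` of a unit-speed curve. -/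
def pnorm (γ : ℝ → E3) : ℝ → E3 := fun t => (curv γ t)⁻¹ • deriv (deriv γ) t

/-- Unit binormal `b = e × n` of a unit-speed curve. -/
def binorm (γ : ℝ → E3) : ℝ → E3 := fun t => cross3 (tang γ t) (pnorm γ t)

/-- The reflection `S(x,y,z) = (x, y, -z)`. -/
def S₃ : E3 → E3 := fun x =>
  (WithLp.equiv 2 (Fin 3 → ℝ)).symm ![x 0, x 1, -x 2]


private lemma hasDerivE3 (f f' : ℝ → Fin 3 → ℝ) (t : ℝ)
    (h : HasDerivAt f (f' t) t) :
    HasDerivAt (fun t => ((WithLp.equiv 2 (Fin 3 → ℝ)).symm (f t) : E3))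
      ((WithLp.equiv 2 (Fin 3 → ℝ)).symm (f' t)) t :=
  (PiLp.continuousLinearEquiv 2 ℝ (fun _ : Fin 3 => ℝ)).symm.hasFDerivAt.comp_hasDerivAt t h

private lemma deriv_c₁ (t : ℝ) :
    deriv c₁ t = (WithLp.equiv 2 (Fin 3 → ℝ)).symm ![-sin t, cos t, 0] := by
  refine HasDerivAt.deriv (hasDerivE3 _ (fun t => ![-sin t, cos t, 0]) t ?_)
  rw [hasDerivAt_pi]
  intro i
  fin_cases i <;> simp <;>
  first
    | exact (Real.hasDerivAt_cos t)
    | exact (Real.hasDerivAt_sin t)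
    | exact hasDerivAt_const t 0

private lemma deriv2_c₁ (t : ℝ) :
    deriv (deriv c₁) t = (WithLp.equiv 2 (Fin 3 → ℝ)).symm ![-cos t, -sin t, 0] := by
  have h : deriv c₁ = fun t => ((WithLp.equiv 2 (Fin 3 → ℝ)).symm ![-sin t, cos t, 0] : E3) :=
    funext deriv_c₁
  rw [h]
  refine HasDerivAt.deriv (hasDerivE3 _ (fun t => ![-cos t, -sin t, 0]) t ?_)
  rw [hasDerivAt_pi]
  intro i
  fin_cases i <;> simp
  · exact (Real.hasDerivAt_sin t).neg
  · exact (Real.hasDerivAt_cos t)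
  · exact hasDerivAt_const t 0

private lemma curv_c₁ (t : ℝ) : curv c₁ t = 1 := by
  rw [curv, deriv2_c₁, EuclideanSpace.norm_eq]
  simp [Fin.sum_univ_three]

private lemma pnorm_c₁ (t : ℝ) :
    pnorm c₁ t = (WithLp.equiv 2 (Fin 3 → ℝ)).symm ![-cos t, -sin t, 0] := by
  rw [pnorm, curv_c₁, deriv2_c₁, inv_one, one_smul]

private lemma binorm_c₁ (t : ℝ) :
    binorm c₁ t = (WithLp.equiv 2 (Fin 3 → ℝ)).symm ![0, 0, 1] := by
  rw [binorm, tang, deriv_c₁, pnorm_c₁]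
  simp [cross3]
  rw [show sin t * sin t + cos t * cos t = 1 from by
    rw [← sq, ← sq]; exact sin_sq_add_cos_sq t]

private lemma isometry_S₃ : Isometry S₃ := by
  refine Isometry.of_dist_eq fun x y => ?_
  rw [EuclideanSpace.dist_eq, EuclideanSpace.dist_eq]
  congr 1
  simp [S₃, Fin.sum_univ_three, Real.dist_eq, ← sq_abs]
  rw [show -x 2 + y 2 = -(x 2 - y 2) by ring, abs_neg]

/-- along the planar circular arc `c₁` on `[-π/6, π/6]`, the
dual strip `f^{-α}` is the image of `f^α` under the isometry
`S(x,y,z) = (x,y,-z)`: `f^{-α} = S ∘ f^α`; in particular `f^{-α}` is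
congruent to `f^α`. -/
theorem stmt15 (α : ℝ → ℝ) (hα : ContDiff ℝ ∞ α)
    (hα1 : ∀ t ∈ Icc (-(π/6)) (π/6), α t ∈ Ioo 0 (π/2))
    -- `β : [-π/6, π/6] → (0, π)` is determined by `cot β = α'/sin α`:
    (β : ℝ → ℝ)
    (hβ : ∀ t ∈ Icc (-(π/6)) (π/6), 0 < β t ∧ β t < π ∧
      cos (β t) * sin (α t) = deriv α t * sin (β t))
    (fp fm : ℝ → ℝ → E3)
    (hfp : ∀ t v, fp t v = c₁ t + v • (cos (β t) • tang c₁ t +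
      sin (β t) • (cos (α t) • pnorm c₁ t + sin (α t) • binorm c₁ t)))
    (hfm : ∀ t v, fm t v = c₁ t + v • (cos (β t) • tang c₁ t +
      sin (β t) • (cos (α t) • pnorm c₁ t - sin (α t) • binorm c₁ t))) :
    Isometry S₃ ∧
    ∀ t ∈ Icc (-(π/6)) (π/6), ∀ v : ℝ, fm t v = S₃ (fp t v) := by
  refine ⟨isometry_S₃, fun t _ v => ?_⟩
  rw [hfm, hfp, tang, deriv_c₁, pnorm_c₁, binorm_c₁]
  ext i
  fin_cases i <;>
    simp [S₃, c₁, Fin.sum_univ_three, mul_add, mul_sub] <;> ring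
end
end
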